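/- For ω > 1 and 0 < z, Barnes' double zeta function satisfies ζ₂(s, ω-1, z) = ζ₂(s,ω,z) - ω^{-s} ζ(s, z/ω) + ω^{-s} ζ₂(s, 1 - 1/ω, z/ω), as an identity of meromorphic functions in s (valid for Re(s) > 2 by rearrangement of absolutely convergent series). -/

import Mathlib

open Complex Function

set_option maxHeartbeats 1000000

private lemma hasSum_sum_type' {M : Type*} [AddCommMonoid M] [TopologicalSpace M]
    [ContinuousAdd M] {α β : Type*} {f : α ⊕ β → M} {a b : M}
    (ha : HasSum (f ∘ Sum.inl) a) (hb : HasSum (f ∘ Sum.inr) b) : HasSum f (a + b) := by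
  refine HasSum.add_isCompl Set.isCompl_range_inl_range_inr ?_ ?_
  · exact (Sum.inl_injective.hasSum_range_iff).2 ha
  · exact (Sum.inr_injective.hasSum_range_iff).2 hb

private lemma summable_nat_one_add_rpow {t : ℝ} (ht : 1 < t) :
    Summable fun n : ℕ => (1 + (n : ℝ)) ^ (-t) := by
  have h : Summable fun n : ℕ => ((n : ℝ)) ^ (-t) :=
    Real.summable_nat_rpow.2 (by linarith)
  have := (summable_nat_add_iff 1).2 h
  refine this.congr fun n => ?_
  push_cast
  ring_nf

private lemma summable_barnes (z α β : ℝ) (hz : 0 < z) (hα : 0 < α) (hβ : 0 < β)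
    (s : ℂ) (hs : 2 < s.re) :
    Summable (fun pq : ℕ × ℕ => ((z + pq.1 * α + pq.2 * β : ℝ) : ℂ) ^ (-s)) := by
  set σ := s.re with hσ
  set m := min z (min α β) with hm
  have hm0 : 0 < m := lt_min hz (lt_min hα hβ)
  have ht : 1 < σ / 2 := by linarith
  apply Summable.of_norm
  have hsum : Summable fun pq : ℕ × ℕ =>
      m ^ (-σ) * ((1 + (pq.1 : ℝ)) ^ (-(σ / 2)) * (1 + (pq.2 : ℝ)) ^ (-(σ / 2))) := by
    refine Summable.mul_left _ ?_
    exact (summable_nat_one_add_rpow ht).mul_of_nonneg (summable_nat_one_add_rpow ht)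
      (fun n => Real.rpow_nonneg (by positivity) _)
      (fun n => Real.rpow_nonneg (by positivity) _)
  refine Summable.of_nonneg_of_le (fun _ => norm_nonneg _) (fun pq => ?_) hsum
  obtain ⟨p, q⟩ := pq
  have hx : (0 : ℝ) < z + p * α + q * β := by positivity
  rw [Complex.norm_cpow_eq_rpow_re_of_pos hx, neg_re, ← hσ]
  have h1 : m * (1 + p + q) ≤ z + p * α + q * β := by
    have h2 : m ≤ z := min_le_left _ _
    have h3 : m ≤ α := le_trans (min_le_right _ _) (min_le_left _ _)
    have h4 : m ≤ β := le_trans (min_le_right _ _) (min_le_right _ _)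
    have h5 : m * p ≤ α * p := mul_le_mul_of_nonneg_right h3 (Nat.cast_nonneg p)
    have h6 : m * q ≤ β * q := mul_le_mul_of_nonneg_right h4 (Nat.cast_nonneg q)
    nlinarith
  have hmp : (0 : ℝ) < m * (1 + p + q) := by positivity
  have step1 : (z + p * α + q * β) ^ (-σ) ≤ (m * (1 + p + q)) ^ (-σ) :=
    Real.rpow_le_rpow_of_nonpos hmp h1 (by linarith)
  have step2 : (m * (1 + p + q)) ^ (-σ) = m ^ (-σ) * ((1 + p + q : ℝ)) ^ (-σ) :=
    Real.mul_rpow hm0.le (by positivity)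
  have hbase : (1 + (p : ℝ)) * (1 + (q : ℝ)) ≤ ((1 + p + q : ℝ)) ^ (2 : ℝ) := by
    have hp : (0:ℝ) ≤ p := Nat.cast_nonneg p
    have hq : (0:ℝ) ≤ q := Nat.cast_nonneg q
    rw [show ((2:ℝ)) = ((2:ℕ):ℝ) by norm_num, Real.rpow_natCast]
    nlinarith
  have e1 : ((1 + p + q : ℝ)) ^ (-σ) = (((1 + p + q : ℝ)) ^ (2:ℝ)) ^ (-(σ/2)) := by
    rw [← Real.rpow_mul (by positivity)]
    congr 1
    ring
  have e2 : (((1 + p + q : ℝ)) ^ (2:ℝ)) ^ (-(σ/2)) ≤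
      ((1 + (p : ℝ)) * (1 + (q : ℝ))) ^ (-(σ/2)) :=
    Real.rpow_le_rpow_of_nonpos (by positivity) hbase (by linarith)
  have e3 : ((1 + (p : ℝ)) * (1 + (q : ℝ))) ^ (-(σ/2)) =
      (1 + (p : ℝ)) ^ (-(σ/2)) * (1 + (q : ℝ)) ^ (-(σ/2)) :=
    Real.mul_rpow (by positivity) (by positivity)
  calc (z + p * α + q * β) ^ (-σ) ≤ (m * (1 + p + q)) ^ (-σ) := step1
    _ = m ^ (-σ) * ((1 + p + q : ℝ)) ^ (-σ) := step2
    _ ≤ m ^ (-σ) * ((1 + (p : ℝ)) ^ (-(σ/2)) * (1 + (q : ℝ)) ^ (-(σ/2))) := by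
        refine mul_le_mul_of_nonneg_left ?_ (Real.rpow_nonneg hm0.le _)
        rw [e1, ← e3]; exact e2

private def eqv1 : ℕ ⊕ ℕ × ℕ ≃ ℕ × ℕ where
  toFun x := match x with
    | .inl q => (0, q)
    | .inr pq => (pq.1 + 1, pq.2)
  invFun y := match y with
    | (0, q) => .inl q
    | (p+1, q) => .inr (p, q)
  left_inv x := by rcases x with q | ⟨p, q⟩ <;> rfl
  right_inv y := by rcases y with ⟨_ | p, q⟩ <;> rfl

private def eqv2 : ℕ × ℕ ⊕ ℕ × ℕ ≃ ℕ × ℕ where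
  toFun x := match x with
    | .inl pq => (pq.1, pq.1 + pq.2)
    | .inr pq => (pq.1 + pq.2 + 1, pq.2)
  invFun y := if y.1 ≤ y.2 then .inl (y.1, y.2 - y.1) else .inr (y.1 - y.2 - 1, y.2)
  left_inv x := by
    rcases x with ⟨p, q⟩ | ⟨p, q⟩ <;>
    · dsimp only
      split_ifs with h
      all_goals first
        | (exfalso; omega)
        | (congr 1 <;> omega)
        | (congr 1; exact Prod.ext (by omega) (by omega))
  right_inv y := by
    rcases y with ⟨p, q⟩
    dsimp only
    split_ifs with h <;>
      · dsimp only
        exact Prod.ext (by omega) (by omega)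

theorem barnesZeta2_descent (ω z : ℝ) (hω : 1 < ω) (hz : 0 < z)
    (s : ℂ) (hs : 2 < s.re) :
    (∑' (p : ℕ) (q : ℕ), (((z + p * (ω - 1) + q : ℝ)) : ℂ) ^ (-s))
      = (∑' (p : ℕ) (q : ℕ), (((z + p * ω + q : ℝ)) : ℂ) ^ (-s))
        - (ω : ℂ) ^ (-s) * (∑' n : ℕ, (((z / ω + n : ℝ)) : ℂ) ^ (-s))
        + (ω : ℂ) ^ (-s) *
          (∑' (p : ℕ) (q : ℕ), (((z / ω + p * (1 - 1 / ω) + q : ℝ)) : ℂ) ^ (-s)) := by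
  have hω0 : (0:ℝ) < ω := by linarith
  have hω1 : (0:ℝ) < ω - 1 := by linarith
  have hzω : (0:ℝ) < z / ω := by positivity
  have h1ω : (0:ℝ) < 1 - 1 / ω := by
    have : 1 / ω < 1 := by rw [div_lt_one hω0]; exact hω
    linarith
  set fL : ℕ × ℕ → ℂ := fun pq => ((z + pq.1 * (ω - 1) + pq.2 : ℝ) : ℂ) ^ (-s) with hfL
  set fA : ℕ × ℕ → ℂ := fun pq => ((z + pq.1 * ω + pq.2 : ℝ) : ℂ) ^ (-s) with hfA
  set fC : ℕ × ℕ → ℂ := fun pq => ((z + pq.1 * (ω - 1) + pq.2 * ω : ℝ) : ℂ) ^ (-s) with hfC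
  set fR : ℕ × ℕ → ℂ :=
    fun pq => ((z / ω + pq.1 * (1 - 1 / ω) + pq.2 : ℝ) : ℂ) ^ (-s) with hfR
  set fB : ℕ → ℂ := fun n => ((z + n * ω : ℝ) : ℂ) ^ (-s) with hfB
  have SL : Summable fL := by
    refine (summable_barnes z (ω - 1) 1 hz hω1 one_pos s hs).congr fun pq => ?_
    show ((z + pq.1 * (ω - 1) + pq.2 * 1 : ℝ) : ℂ) ^ (-s)
        = ((z + pq.1 * (ω - 1) + pq.2 : ℝ) : ℂ) ^ (-s)
    norm_num
  have SA : Summable fA := by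
    refine (summable_barnes z ω 1 hz hω0 one_pos s hs).congr fun pq => ?_
    show ((z + pq.1 * ω + pq.2 * 1 : ℝ) : ℂ) ^ (-s)
        = ((z + pq.1 * ω + pq.2 : ℝ) : ℂ) ^ (-s)
    norm_num
  have SC : Summable fC := summable_barnes z (ω - 1) ω hz hω1 hω0 s hs
  have SR : Summable fR := by
    refine (summable_barnes (z / ω) (1 - 1 / ω) 1 hzω h1ω one_pos s hs).congr fun pq => ?_
    show ((z / ω + pq.1 * (1 - 1 / ω) + pq.2 * 1 : ℝ) : ℂ) ^ (-s)
        = ((z / ω + pq.1 * (1 - 1 / ω) + pq.2 : ℝ) : ℂ) ^ (-s)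
    norm_num
  have eL : (∑' (p : ℕ) (q : ℕ), (((z + p * (ω - 1) + q : ℝ)) : ℂ) ^ (-s))
      = ∑' pq : ℕ × ℕ, fL pq := (Summable.tsum_prod SL).symm
  have eA : (∑' (p : ℕ) (q : ℕ), (((z + p * ω + q : ℝ)) : ℂ) ^ (-s))
      = ∑' pq : ℕ × ℕ, fA pq := (Summable.tsum_prod SA).symm
  have eR : (∑' (p : ℕ) (q : ℕ), (((z / ω + p * (1 - 1 / ω) + q : ℝ)) : ℂ) ^ (-s))
      = ∑' pq : ℕ × ℕ, fR pq := (Summable.tsum_prod SR).symm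
  rw [eL, eA, eR]
  have key : ∀ x : ℝ, 0 ≤ x → (ω : ℂ) ^ (-s) * ((x : ℝ) : ℂ) ^ (-s)
      = ((ω * x : ℝ) : ℂ) ^ (-s) := by
    intro x hx
    rw [Complex.ofReal_mul, Complex.mul_cpow_ofReal_nonneg hω0.le hx]
  have eB : (ω : ℂ) ^ (-s) * (∑' n : ℕ, (((z / ω + n : ℝ)) : ℂ) ^ (-s)) = ∑' n, fB n := by
    rw [← tsum_mul_left]
    refine tsum_congr fun n => ?_
    have harg : ω * (z / ω + (n : ℝ)) = z + n * ω := by field_simp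
    rw [key _ (by positivity), harg]
  have eT : (ω : ℂ) ^ (-s) * (∑' pq : ℕ × ℕ, fR pq) = ∑' pq, fC pq := by
    rw [← tsum_mul_left]
    refine tsum_congr fun pq => ?_
    have harg : ω * (z / ω + (pq.1 : ℝ) * (1 - 1 / ω) + pq.2)
        = z + pq.1 * (ω - 1) + pq.2 * ω := by field_simp; try ring
    show (ω : ℂ) ^ (-s) * ((z / ω + pq.1 * (1 - 1 / ω) + pq.2 : ℝ) : ℂ) ^ (-s) = fC pq
    rw [key _ (by positivity), harg]
  rw [eB, eT]
  have hC : (∑' pq : ℕ × ℕ, fC pq)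
      = (∑' n, fB n) + ∑' pq : ℕ × ℕ, fC (pq.1 + 1, pq.2) := by
    have hsum : Summable (fC ∘ eqv1) := eqv1.summable_iff.2 SC
    have h1 : Summable (fC ∘ eqv1 ∘ Sum.inl) := hsum.comp_injective Sum.inl_injective
    have h2 : Summable (fC ∘ eqv1 ∘ Sum.inr) := hsum.comp_injective Sum.inr_injective
    have key2 : (∑' c : ℕ ⊕ ℕ × ℕ, (fC ∘ eqv1) c)
        = (∑' n : ℕ, (fC ∘ eqv1 ∘ Sum.inl) n)
          + ∑' pq : ℕ × ℕ, (fC ∘ eqv1 ∘ Sum.inr) pq :=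
      (hasSum_sum_type' (f := fC ∘ eqv1) h1.hasSum h2.hasSum).tsum_eq
    have e0 : (∑' pq : ℕ × ℕ, fC pq) = ∑' c : ℕ ⊕ ℕ × ℕ, (fC ∘ eqv1) c :=
      (Equiv.tsum_eq eqv1 fC).symm.trans (tsum_congr fun c => rfl)
    rw [e0, key2]
    congr 1
    refine tsum_congr fun n => ?_
    show ((z + (0:ℕ) * (ω - 1) + n * ω : ℝ) : ℂ) ^ (-s) = ((z + n * ω : ℝ) : ℂ) ^ (-s)
    norm_num
  have hL : (∑' pq : ℕ × ℕ, fL pq)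
      = (∑' pq : ℕ × ℕ, fA pq) + ∑' pq : ℕ × ℕ, fC (pq.1 + 1, pq.2) := by
    have hsum : Summable (fL ∘ eqv2) := eqv2.summable_iff.2 SL
    have h1 : Summable (fL ∘ eqv2 ∘ Sum.inl) := hsum.comp_injective Sum.inl_injective
    have h2 : Summable (fL ∘ eqv2 ∘ Sum.inr) := hsum.comp_injective Sum.inr_injective
    have key2 : (∑' c : ℕ × ℕ ⊕ ℕ × ℕ, (fL ∘ eqv2) c)
        = (∑' pq : ℕ × ℕ, (fL ∘ eqv2 ∘ Sum.inl) pq)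
          + ∑' pq : ℕ × ℕ, (fL ∘ eqv2 ∘ Sum.inr) pq :=
      (hasSum_sum_type' (f := fL ∘ eqv2) h1.hasSum h2.hasSum).tsum_eq
    have e0 : (∑' pq : ℕ × ℕ, fL pq) = ∑' c : ℕ × ℕ ⊕ ℕ × ℕ, (fL ∘ eqv2) c :=
      (Equiv.tsum_eq eqv2 fL).symm.trans (tsum_congr fun c => rfl)
    rw [e0, key2]
    congr 1
    · refine tsum_congr fun pq => ?_
      show ((z + pq.1 * (ω - 1) + (pq.1 + pq.2 : ℕ) : ℝ) : ℂ) ^ (-s)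
          = ((z + pq.1 * ω + pq.2 : ℝ) : ℂ) ^ (-s)
      congr 1
      push_cast
      ring
    · refine tsum_congr fun pq => ?_
      show ((z + (pq.1 + pq.2 + 1 : ℕ) * (ω - 1) + pq.2 : ℝ) : ℂ) ^ (-s)
          = ((z + (pq.1 + 1 : ℕ) * (ω - 1) + pq.2 * ω : ℝ) : ℂ) ^ (-s)
      congr 1
      push_cast
      ring
  rw [hL, hC]
  ring
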